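/- For every g ∈ GL_n(E) non-critical of type S₀: the class of n'·w_{0,s} in T_s\GL_s(E)/B_s depends only on the double coset Z_{S₀}gB and not on the chosen representative g, and moreover this class lies in Φ^{cr}_{nc,s}, i.e. [v]·n'·w_{0,s} ∈ B_s w_{0,s} B_s for every v ∈ S_s. Consequently p_cr is a well-defined map Φ_nc(S₀) → Φ^{cr}_{nc,s}. (This is the paper's claim that, by the non-critical assumption, extracting the crystalline-quotient parameters factors through the space of non-critical crystalline Hodge parameters.) -/

import Mathlib

/-!
Statement 8: the crystalline-parameter map `p_cr` is well defined on
`Φ_nc(S₀)` and takes values in the space `Φ^cr_{nc,s}` of non-critical crystalline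
Hodge parameters.  All indexing is 0-based; `s = n - #S₀` is the number of blocks.
-/

open scoped Classical

noncomputable section

namespace Stmt8

/-- The permutation matrix `[u]`, characterized by `[u] · eⱼ = e_{u j}`. -/
def permMat (E : Type*) [Field E] {n : ℕ} (u : Equiv.Perm (Fin n)) :
    Matrix (Fin n) (Fin n) E :=
  Matrix.of fun i j => if i = u j then 1 else 0

/-- The antidiagonal permutation matrix `w₀`. -/
def w0Mat (E : Type*) [Field E] (n : ℕ) : Matrix (Fin n) (Fin n) E :=
  Matrix.of fun i j => if (i : ℕ) + (j : ℕ) + 1 = n then 1 else 0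

variable {E : Type*} [Field E]

/-- Membership in the Borel subgroup `B` of invertible upper triangular matrices. -/
def IsBorel {n : ℕ} (b : Matrix (Fin n) (Fin n) E) : Prop :=
  IsUnit b ∧ ∀ i j : Fin n, j < i → b i j = 0

/-- Upper triangular unipotent matrices (the group `N`). -/
def IsUniUpper {n : ℕ} (m : Matrix (Fin n) (Fin n) E) : Prop :=
  (∀ i j : Fin n, j < i → m i j = 0) ∧ ∀ i : Fin n, m i i = 1

/-- Membership in the big Bruhat cell `B w₀ B`. -/
def InBigCell {n : ℕ} (g : Matrix (Fin n) (Fin n) E) : Prop :=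
  ∃ b b' : Matrix (Fin n) (Fin n) E, IsBorel b ∧ IsBorel b' ∧ g = b * w0Mat E n * b'

/-- `u ∈ W_n^{S₀}` (0-based). -/
def WminRep {n : ℕ} (S0 : Set ℕ) (u : Equiv.Perm (Fin n)) : Prop :=
  ∀ i j : Fin n, (j : ℕ) = (i : ℕ) + 1 → (i : ℕ) ∈ S0 → u i < u j

/-- `g ∈ GL_n(E)` is non-critical of type `S₀`. -/
def NonCritical {n : ℕ} (S0 : Set ℕ) (g : Matrix (Fin n) (Fin n) E) : Prop :=
  IsUnit g ∧ ∀ u : Equiv.Perm (Fin n), WminRep S0 u → InBigCell (permMat E u * g)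

/-- `p` and `q` lie in the same `J`-block. -/
def SameBlock {n : ℕ} (J : Set ℕ) (p q : Fin n) : Prop :=
  ∀ k : ℕ, min (p : ℕ) (q : ℕ) ≤ k → k < max (p : ℕ) (q : ℕ) → k ∈ J

/-- Membership in the centre `Z_J` of the Levi `L_J`. -/
def InCenterLevi {n : ℕ} (J : Set ℕ) (g : Matrix (Fin n) (Fin n) E) : Prop :=
  IsUnit g ∧ (∀ p q : Fin n, p ≠ q → g p q = 0) ∧
    ∀ p q : Fin n, SameBlock J p q → g p p = g q q

/-- Invertible diagonal matrices (the torus `T_s`). -/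
def IsTorus {s : ℕ} (t : Matrix (Fin s) (Fin s) E) : Prop :=
  IsUnit t ∧ ∀ i j : Fin s, i ≠ j → t i j = 0

/-- Equality of the classes of `x`, `y` in the double-coset space `T_s \ GL_s(E) / B_s`. -/
def CrCosetEq {s : ℕ} (x y : Matrix (Fin s) (Fin s) E) : Prop :=
  ∃ t c : Matrix (Fin s) (Fin s) E, IsTorus t ∧ IsBorel c ∧ y = t * x * c

/-- The bottom-right `s × s` corner of an `n × n` matrix. -/
def corner {n : ℕ} (s : ℕ) (m : Matrix (Fin n) (Fin n) E) : Matrix (Fin s) (Fin s) E :=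
  Matrix.of fun i j =>
    if h : n - s + (i : ℕ) < n ∧ n - s + (j : ℕ) < n then
      m ⟨n - s + (i : ℕ), h.1⟩ ⟨n - s + (j : ℕ), h.2⟩
    else 0

/-- Characterization of the special element `u₀ ∈ W_n^{S₀}`. -/
def IsU0 {n : ℕ} (S0 : Set ℕ) (u : Equiv.Perm (Fin n)) : Prop :=
  (∀ p q : Fin n, p < q → (p : ℕ) ∉ S0 → (q : ℕ) ∉ S0 → u p < u q) ∧
  (∀ p q : Fin n, p < q → (p : ℕ) ∈ S0 → (q : ℕ) ∈ S0 → u p < u q) ∧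
  (∀ p q : Fin n, (p : ℕ) ∈ S0 → (q : ℕ) ∉ S0 → u p < u q)


section Helpers

variable {E : Type*} [Field E] {n : ℕ}

lemma permMat_mul_apply (u : Equiv.Perm (Fin n)) (X : Matrix (Fin n) (Fin n) E) (i j : Fin n) :
    (permMat E u * X) i j = X (u⁻¹ i) j := by
  rw [Matrix.mul_apply, Finset.sum_eq_single (u⁻¹ i)]
  · simp [permMat]
  · intro k _ hk
    simp only [permMat, Matrix.of_apply]
    rw [if_neg, zero_mul]
    intro h
    exact hk (by rw [h]; simp)
  · simp

lemma mul_permMat_apply (u : Equiv.Perm (Fin n)) (X : Matrix (Fin n) (Fin n) E) (i j : Fin n) :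
    (X * permMat E u) i j = X i (u j) := by
  rw [Matrix.mul_apply, Finset.sum_eq_single (u j)]
  · simp [permMat]
  · intro k _ hk
    simp only [permMat, Matrix.of_apply]
    rw [if_neg hk, mul_zero]
  · simp

lemma permMat_mul (u v : Equiv.Perm (Fin n)) :
    permMat E (u * v) = permMat E u * permMat E v := by
  ext i j
  rw [permMat_mul_apply]
  simp only [permMat, Matrix.of_apply, Equiv.Perm.mul_apply]
  by_cases h : i = u (v j)
  · simp [h]
  · simp [h, Equiv.symm_apply_eq]

lemma w0_mul_apply (X : Matrix (Fin n) (Fin n) E) (i j : Fin n) :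
    (w0Mat E n * X) i j = X i.rev j := by
  rw [Matrix.mul_apply, Finset.sum_eq_single i.rev]
  · simp only [w0Mat, Matrix.of_apply]
    rw [if_pos (by have := i.isLt; have := Fin.val_rev i; omega), one_mul]
  · intro k _ hk
    simp only [w0Mat, Matrix.of_apply]
    rw [if_neg, zero_mul]
    intro h
    exact hk (Fin.ext (by have := i.isLt; have := k.isLt; have := Fin.val_rev i; omega))
  · simp

lemma mul_w0_apply (X : Matrix (Fin n) (Fin n) E) (i j : Fin n) :
    (X * w0Mat E n) i j = X i j.rev := by
  rw [Matrix.mul_apply, Finset.sum_eq_single j.rev]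
  · simp only [w0Mat, Matrix.of_apply]
    rw [if_pos (by have := j.isLt; have := Fin.val_rev j; omega), mul_one]
  · intro k _ hk
    simp only [w0Mat, Matrix.of_apply]
    rw [if_neg, mul_zero]
    intro h
    exact hk (Fin.ext (by have := j.isLt; have := k.isLt; have := Fin.val_rev j; omega))
  · simp

lemma w0_mul_w0 : w0Mat E n * w0Mat E n = 1 := by
  ext i j
  rw [w0_mul_apply]
  simp only [w0Mat, Matrix.of_apply, Matrix.one_apply]
  have := i.isLt; have := j.isLt; have := Fin.val_rev i
  by_cases h : i = j
  · rw [if_pos (by omega), if_pos h]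
  · rw [if_neg, if_neg h]
    intro hc
    exact h (Fin.ext (by omega))

lemma isUnit_w0 : IsUnit (w0Mat E n) :=
  (Matrix.isUnit_iff_isUnit_det _).2 (Matrix.isUnit_det_of_right_inverse w0_mul_w0)

lemma isUnit_of_upper {M : Matrix (Fin n) (Fin n) E} (hu : ∀ i j : Fin n, j < i → M i j = 0)
    (hd : ∀ i, M i i ≠ 0) : IsUnit M := by
  rw [Matrix.isUnit_iff_isUnit_det, Matrix.det_of_upperTriangular (fun i j h => hu i j h)]
  exact (Finset.prod_ne_zero_iff.2 fun i _ => hd i).isUnit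

lemma diag_ne_zero_of_upper {M : Matrix (Fin n) (Fin n) E}
    (hu : ∀ i j : Fin n, j < i → M i j = 0) (h : IsUnit M) (i : Fin n) : M i i ≠ 0 := by
  have hd := (Matrix.isUnit_iff_isUnit_det M).1 h
  rw [Matrix.det_of_upperTriangular (fun i j h => hu i j h)] at hd
  exact fun hc => hd.ne_zero (Finset.prod_eq_zero (Finset.mem_univ i) hc)

lemma isUnit_of_lower {M : Matrix (Fin n) (Fin n) E} (hl : ∀ i j : Fin n, i < j → M i j = 0)
    (hd : ∀ i, M i i ≠ 0) : IsUnit M := by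
  rw [Matrix.isUnit_iff_isUnit_det,
    Matrix.det_of_lowerTriangular M (fun i j h => hl i j h)]
  exact (Finset.prod_ne_zero_iff.2 fun i _ => hd i).isUnit

lemma diag_ne_zero_of_lower {M : Matrix (Fin n) (Fin n) E}
    (hl : ∀ i j : Fin n, i < j → M i j = 0) (h : IsUnit M) (i : Fin n) : M i i ≠ 0 := by
  have hd := (Matrix.isUnit_iff_isUnit_det M).1 h
  rw [Matrix.det_of_lowerTriangular M (fun i j h => hl i j h)] at hd
  exact fun hc => hd.ne_zero (Finset.prod_eq_zero (Finset.mem_univ i) hc)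

lemma IsBorel.mul {b c : Matrix (Fin n) (Fin n) E} (hb : IsBorel b) (hc : IsBorel c) :
    IsBorel (b * c) := by
  refine ⟨hb.1.mul hc.1, fun i j hij => ?_⟩
  rw [Matrix.mul_apply]
  refine Finset.sum_eq_zero fun k _ => ?_
  by_cases hk : k < i
  · rw [hb.2 i k hk, zero_mul]
  · rw [hc.2 k j (lt_of_lt_of_le hij (not_lt.1 hk)), mul_zero]

lemma IsBorel.inv {b : Matrix (Fin n) (Fin n) E} (hb : IsBorel b) : IsBorel b⁻¹ := by
  have hdet : IsUnit b.det := (Matrix.isUnit_iff_isUnit_det b).1 hb.1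
  haveI := b.invertibleOfIsUnitDet hdet
  refine ⟨?_, fun i j hij => Matrix.blockTriangular_inv_of_blockTriangular
    (fun i j (h : (id j : Fin n) < id i) => hb.2 i j h) hij⟩
  exact (Matrix.isUnit_iff_isUnit_det _).2 (Matrix.isUnit_det_of_right_inverse (Matrix.nonsing_inv_mul b hdet))

lemma IsBorel.mul_inv_cancel {b : Matrix (Fin n) (Fin n) E} (hb : IsBorel b) : b * b⁻¹ = 1 :=
  Matrix.mul_nonsing_inv b ((Matrix.isUnit_iff_isUnit_det b).1 hb.1)

end Helpers

section Helpers2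

variable {E : Type*} [Field E] {n : ℕ}

lemma corner_apply {s : ℕ} (hs : s ≤ n) (m : Matrix (Fin n) (Fin n) E) (i j : Fin s) :
    corner s m i j
      = m ⟨n - s + (i : ℕ), by have := i.isLt; omega⟩ ⟨n - s + (j : ℕ), by have := j.isLt; omega⟩ := by
  unfold corner
  rw [Matrix.of_apply, dif_pos ⟨by have := i.isLt; omega, by have := j.isLt; omega⟩]

lemma sum_corner {s : ℕ} (hs : s ≤ n) (f : Fin n → E)
    (hf : ∀ k : Fin n, (k : ℕ) < n - s → f k = 0) :
    ∑ k, f k = ∑ k : Fin s, f ⟨n - s + (k : ℕ), by have := k.isLt; omega⟩ := by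
  have hinj : Function.Injective
      (fun k : Fin s => (⟨n - s + (k : ℕ), by have := k.isLt; omega⟩ : Fin n)) := by
    intro a b hab
    have : n - s + (a : ℕ) = n - s + (b : ℕ) := congrArg Fin.val hab
    exact Fin.ext (by omega)
  set e : Fin s → Fin n := fun k : Fin s => (⟨n - s + (k : ℕ), by have := k.isLt; omega⟩ : Fin n) with he
  have h1 : ∑ k : Fin n, f k = ∑ x ∈ Finset.image e Finset.univ, f x := by
    refine (Finset.sum_subset (Finset.subset_univ _) fun x _ hx => hf x ?_).symm
    by_contra hge
    refine hx (Finset.mem_image.2 ⟨⟨(x : ℕ) - (n - s), by have := x.isLt; omega⟩,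
      Finset.mem_univ _, Fin.ext (by simp [he]; omega)⟩)
  have h2 : ∑ x ∈ Finset.image e Finset.univ, f x = ∑ k : Fin s, f (e k) :=
    Finset.sum_image (fun a _ b _ h => hinj h)
  exact h1.trans h2

lemma corner_mul_upper {s : ℕ} (hs : s ≤ n) (U X : Matrix (Fin n) (Fin n) E)
    (hU : ∀ i j : Fin n, j < i → U i j = 0) :
    corner s (U * X) = corner s U * corner s X := by
  ext i j
  rw [corner_apply hs, Matrix.mul_apply, Matrix.mul_apply]
  rw [sum_corner hs _ (fun k hk => ?_)]
  · refine Finset.sum_congr rfl fun k _ => ?_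
    rw [corner_apply hs, corner_apply hs]
  · rw [hU _ k (by rw [Fin.lt_def]; simp; omega), zero_mul]

lemma corner_borel {s : ℕ} (hs : s ≤ n) {b : Matrix (Fin n) (Fin n) E} (hb : IsBorel b) :
    IsBorel (corner s b) := by
  have hupper : ∀ i j : Fin s, j < i → corner s b i j = 0 := by
    intro i j hij
    rw [corner_apply hs]
    exact hb.2 _ _ (by rw [Fin.lt_def]; simp; omega)
  refine ⟨isUnit_of_upper hupper fun i => ?_, hupper⟩
  rw [corner_apply hs]
  exact diag_ne_zero_of_upper hb.2 hb.1 _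

lemma corner_lower {s : ℕ} (hs : s ≤ n) {L : Matrix (Fin n) (Fin n) E}
    (hl : ∀ i j : Fin n, i < j → L i j = 0) (hL : IsUnit L) :
    (∀ i j : Fin s, i < j → corner s L i j = 0) ∧ IsUnit (corner s L) := by
  have hlow : ∀ i j : Fin s, i < j → corner s L i j = 0 := by
    intro i j hij
    rw [corner_apply hs]
    exact hl _ _ (by rw [Fin.lt_def]; simp; omega)
  refine ⟨hlow, isUnit_of_lower hlow fun i => ?_⟩
  rw [corner_apply hs]
  exact diag_ne_zero_of_lower hl hL _

/-- Uniqueness of the unipotent factor in `N w₀ B`. -/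
lemma unip_unique {n1 n2 b1 b2 : Matrix (Fin n) (Fin n) E}
    (h1 : IsUniUpper n1) (h2 : IsUniUpper n2) (hb1 : IsBorel b1) (hb2 : IsBorel b2)
    (heq : n1 * w0Mat E n * b1 = n2 * w0Mat E n * b2) : n1 = n2 := by
  set L : Matrix (Fin n) (Fin n) E := w0Mat E n * (b2 * b1⁻¹) * w0Mat E n with hL
  have hn1 : n1 = n2 * L := by
    have h' : n1 * w0Mat E n = n2 * w0Mat E n * (b2 * b1⁻¹) := by
      calc n1 * w0Mat E n = n1 * w0Mat E n * (b1 * b1⁻¹) := by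
            rw [hb1.mul_inv_cancel, mul_one]
        _ = n2 * w0Mat E n * b2 * b1⁻¹ := by rw [← mul_assoc, heq]
        _ = n2 * w0Mat E n * (b2 * b1⁻¹) := by rw [mul_assoc]
    calc n1 = n1 * (w0Mat E n * w0Mat E n) := by rw [w0_mul_w0, mul_one]
      _ = n1 * w0Mat E n * w0Mat E n := by rw [mul_assoc]
      _ = n2 * w0Mat E n * (b2 * b1⁻¹) * w0Mat E n := by rw [h']
      _ = n2 * L := by simp only [hL, mul_assoc]
  -- L is lower triangular
  have hBup : IsBorel (b2 * b1⁻¹) := hb2.mul hb1.inv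
  have hLlow : ∀ i j : Fin n, i < j → L i j = 0 := by
    intro i j hij
    rw [hL, mul_w0_apply, w0_mul_apply]
    exact hBup.2 _ _ (by rw [Fin.lt_def]; rw [Fin.val_rev, Fin.val_rev]
                         have := i.isLt; have := j.isLt; rw [Fin.lt_def] at hij; omega)
  -- L is upper triangular : L = n2⁻¹ * n1
  have hn2unit : IsUnit n2 := isUnit_of_upper h2.1 (fun i => by rw [h2.2]; exact one_ne_zero)
  have hb2' : IsBorel n2 := ⟨hn2unit, h2.1⟩
  have hLup : ∀ i j : Fin n, j < i → L i j = 0 := by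
    have hLeq : L = n2⁻¹ * n1 := by
      rw [hn1, ← mul_assoc, Matrix.nonsing_inv_mul n2
        ((Matrix.isUnit_iff_isUnit_det n2).1 hn2unit), one_mul]
    intro i j hij
    rw [hLeq]
    exact (hb2'.inv.mul ⟨isUnit_of_upper h1.1 (fun i => by rw [h1.2]; exact one_ne_zero),
      h1.1⟩).2 _ _ hij
  -- diagonal entries of L are 1
  have hLone : L = 1 := by
    ext i j
    by_cases hij : i = j
    · subst hij
      have hdiag : (1 : E) = ∑ k, n2 i k * L k i := by
        have h5 := congrArg (fun M => M i i) hn1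
        simpa [Matrix.mul_apply, h1.2 i] using h5
      rw [Finset.sum_eq_single i (fun k _ hk => ?_) (by simp)] at hdiag
      · rw [h2.2 i, one_mul] at hdiag
        rw [Matrix.one_apply_eq]
        exact hdiag.symm
      · rcases lt_or_gt_of_ne hk with h | h
        · rw [h2.1 i k h, zero_mul]
        · rw [hLup k i h, mul_zero]
    · rw [Matrix.one_apply_ne hij]
      rcases lt_or_gt_of_ne hij with h | h
      · exact hLlow _ _ h
      · exact hLup _ _ h
  rw [hn1, hLone, mul_one]

end Helpers2

section LiftPerm

variable {n s : ℕ}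

/-- Lift of a map of `Fin s` to `Fin n`, acting on the last `s` coordinates. -/
def liftFun (hs : s ≤ n) (v : Equiv.Perm (Fin s)) : Fin n → Fin n := fun i =>
  if h : n - s ≤ (i : ℕ) then
    ⟨n - s + ((v ⟨(i : ℕ) - (n - s), by have := i.isLt; omega⟩ : Fin s) : ℕ),
      by have := (v ⟨(i : ℕ) - (n - s), by have := i.isLt; omega⟩).isLt; omega⟩
  else i

lemma liftFun_lt (hs : s ≤ n) (v : Equiv.Perm (Fin s)) (i : Fin n) (h : (i : ℕ) < n - s) :
    liftFun hs v i = i := by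
  rw [liftFun, dif_neg (by omega)]

lemma liftFun_add (hs : s ≤ n) (v : Equiv.Perm (Fin s)) (k : Fin s) :
    liftFun hs v ⟨n - s + (k : ℕ), by have := k.isLt; omega⟩
      = ⟨n - s + ((v k : Fin s) : ℕ), by have := (v k).isLt; omega⟩ := by
  rw [liftFun, dif_pos (by simp)]
  refine Fin.ext ?_
  have h2 : (⟨(↑(⟨n - s + (k : ℕ), by have := k.isLt; omega⟩ : Fin n) : ℕ) - (n - s),
      by have := k.isLt; omega⟩ : Fin s) = k := Fin.ext (by simp)
  exact congrArg (fun t => n - s + ((v t : Fin s) : ℕ)) h2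

lemma liftFun_ge (hs : s ≤ n) (v : Equiv.Perm (Fin s)) (i : Fin n) (h : n - s ≤ (i : ℕ)) :
    n - s ≤ (liftFun hs v i : ℕ) := by
  rw [liftFun, dif_pos h]
  simp

lemma liftFun_inj (hs : s ≤ n) (v : Equiv.Perm (Fin s)) :
    Function.Injective (liftFun hs v) := by
  intro i j hij
  by_cases hi : n - s ≤ (i : ℕ) <;> by_cases hj : n - s ≤ (j : ℕ)
  · set ki : Fin s := ⟨(i : ℕ) - (n - s), by have := i.isLt; omega⟩ with hki
    set kj : Fin s := ⟨(j : ℕ) - (n - s), by have := j.isLt; omega⟩ with hkj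
    simp only [liftFun] at hij
    rw [dif_pos hi, dif_pos hj] at hij
    have : n - s + ((v ki : Fin s) : ℕ) = n - s + ((v kj : Fin s) : ℕ) :=
      congrArg Fin.val hij
    have hv : v ki = v kj := Fin.ext (by omega)
    have : ki = kj := v.injective hv
    have := congrArg Fin.val this
    simp only [hki, hkj] at this
    exact Fin.ext (by omega)
  · exfalso
    have h1 := liftFun_ge hs v i hi
    rw [hij, liftFun_lt hs v j (by omega)] at h1
    omega
  · exfalso
    have h1 := liftFun_ge hs v j hj
    rw [← hij, liftFun_lt hs v i (by omega)] at h1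
    omega
  · rw [liftFun_lt hs v i (by omega), liftFun_lt hs v j (by omega)] at hij
    exact hij

/-- Lift of a permutation of `Fin s` to `Fin n`, acting on the last `s` coordinates. -/
noncomputable def liftPerm (hs : s ≤ n) (v : Equiv.Perm (Fin s)) : Equiv.Perm (Fin n) :=
  Equiv.ofBijective (liftFun hs v) (Finite.injective_iff_bijective.1 (liftFun_inj hs v))

lemma liftPerm_apply (hs : s ≤ n) (v : Equiv.Perm (Fin s)) (i : Fin n) :
    liftPerm hs v i = liftFun hs v i := rfl

lemma liftPerm_lt (hs : s ≤ n) (v : Equiv.Perm (Fin s)) (i : Fin n) (h : (i : ℕ) < n - s) :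
    liftPerm hs v i = i := liftFun_lt hs v i h

lemma liftPerm_add (hs : s ≤ n) (v : Equiv.Perm (Fin s)) (k : Fin s) :
    liftPerm hs v ⟨n - s + (k : ℕ), by have := k.isLt; omega⟩
      = ⟨n - s + ((v k : Fin s) : ℕ), by have := (v k).isLt; omega⟩ := liftFun_add hs v k

lemma liftPerm_ge (hs : s ≤ n) (v : Equiv.Perm (Fin s)) (i : Fin n) (h : n - s ≤ (i : ℕ)) :
    n - s ≤ (liftPerm hs v i : ℕ) := liftFun_ge hs v i h

lemma liftPerm_inv_add (hs : s ≤ n) (v : Equiv.Perm (Fin s)) (k : Fin s) :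
    (liftPerm hs v)⁻¹ ⟨n - s + (k : ℕ), by have := k.isLt; omega⟩
      = ⟨n - s + ((v⁻¹ k : Fin s) : ℕ), by have := (v⁻¹ k).isLt; omega⟩ := by
  rw [Equiv.Perm.inv_eq_iff_eq, liftPerm_add hs v (v⁻¹ k)]
  simp

end LiftPerm

section Counting

variable {n : ℕ}

lemma card_filter_mem (S0 : Set ℕ) (hS0 : ∀ i ∈ S0, i + 1 < n) :
    (Finset.univ.filter fun p : Fin n => (p : ℕ) ∈ S0).card = S0.ncard := by
  have h1 : S0 = Fin.val '' {p : Fin n | (p : ℕ) ∈ S0} := by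
    ext x
    constructor
    · intro hx
      exact ⟨⟨x, by have := hS0 x hx; omega⟩, hx, rfl⟩
    · rintro ⟨p, hp, rfl⟩
      exact hp
  have h2 : {p : Fin n | (p : ℕ) ∈ S0}
      = ↑(Finset.univ.filter fun p : Fin n => (p : ℕ) ∈ S0) := by
    ext p; simp
  conv_rhs => rw [h1, Set.ncard_image_of_injective _ Fin.val_injective, h2,
    Set.ncard_coe_finset]

lemma ncard_le (S0 : Set ℕ) (hS0 : ∀ i ∈ S0, i + 1 < n) : S0.ncard ≤ n := by
  rw [← card_filter_mem S0 hS0]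
  calc (Finset.univ.filter fun p : Fin n => (p : ℕ) ∈ S0).card
      ≤ Finset.univ.card := Finset.card_filter_le _ _
    _ = n := by simp

lemma u0_ge (S0 : Set ℕ) (hS0 : ∀ i ∈ S0, i + 1 < n) (u0 : Equiv.Perm (Fin n))
    (hu0 : IsU0 S0 u0) (p : Fin n) (hp : (p : ℕ) ∉ S0) : S0.ncard ≤ (u0 p : ℕ) := by
  rw [← card_filter_mem S0 hS0]
  calc (Finset.univ.filter fun q : Fin n => (q : ℕ) ∈ S0).card
      ≤ (Finset.Iio (u0 p)).card := by
        refine Finset.card_le_card_of_injOn u0 (fun i hi => ?_) u0.injective.injOn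
        exact Finset.mem_Iio.2 (hu0.2.2 i p (Finset.mem_filter.1 hi).2 hp)
    _ = (u0 p : ℕ) := Fin.card_Iio _

lemma u0_lt (S0 : Set ℕ) (hS0 : ∀ i ∈ S0, i + 1 < n) (u0 : Equiv.Perm (Fin n))
    (hu0 : IsU0 S0 u0) (i : Fin n) (hi : (i : ℕ) ∈ S0) : (u0 i : ℕ) < S0.ncard := by
  have hcomp : (Finset.univ.filter fun p : Fin n => (p : ℕ) ∉ S0).card = n - S0.ncard := by
    have h := Finset.card_filter_add_card_filter_not
      (s := (Finset.univ : Finset (Fin n))) (p := fun p : Fin n => (p : ℕ) ∈ S0)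
    rw [card_filter_mem S0 hS0] at h
    simp only [Finset.card_univ, Fintype.card_fin] at h
    omega
  have hle : n - S0.ncard ≤ (Finset.Ioi (u0 i)).card := by
    rw [← hcomp]
    refine Finset.card_le_card_of_injOn u0 (fun q hq => ?_) u0.injective.injOn
    exact Finset.mem_Ioi.2 (hu0.2.2 i q hi (Finset.mem_filter.1 hq).2)
  rw [Fin.card_Ioi] at hle
  have h1 := ncard_le S0 hS0
  have h2 := (u0 i).isLt
  omega

end Counting

lemma mul_mul_cancel {α : Type*} [Monoid α] {a b : α} (h : a * b = 1) (x : α) :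
    a * (b * x) = x := by rw [← mul_assoc, h, one_mul]

section MoreHelpers

variable {E : Type*} [Field E] {n : ℕ}

lemma w0_conj_apply (M : Matrix (Fin n) (Fin n) E) (i j : Fin n) :
    (w0Mat E n * M * w0Mat E n) i j = M i.rev j.rev := by
  rw [mul_w0_apply, w0_mul_apply]

lemma borel_of_diag {M : Matrix (Fin n) (Fin n) E} (h0 : ∀ i j : Fin n, i ≠ j → M i j = 0)
    (hd : ∀ i, M i i ≠ 0) : IsBorel M :=
  ⟨isUnit_of_upper (fun i j hij => h0 i j hij.ne') hd, fun i j hij => h0 i j hij.ne'⟩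

end MoreHelpers

/-- Let `g` be non-critical of type `S₀` and `g' = z·g·b₀` another
representative of its double coset.  Write `[u₀]g = n_{u₀}·w₀·b` and similarly for `g'`,
and let `n'` be the bottom-right `s×s` corner of `n_{u₀}`.  Then the class of `n'·w_{0,s}`
in `T_s\GL_s(E)/B_s` is the same for `g` and `g'`, and it lies in `Φ^cr_{nc,s}`:
`[v]·n'·w_{0,s} ∈ B_s w_{0,s} B_s` for every `v ∈ S_s`.  Hence `p_cr` is a well-defined
map `Φ_nc(S₀) → Φ^cr_{nc,s}`. -/
theorem statement8
    {n : ℕ} (S0 : Set ℕ) (hS0 : ∀ i ∈ S0, i + 1 < n)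
    (g g' : Matrix (Fin n) (Fin n) E)
    (hg : NonCritical S0 g) (hg' : NonCritical S0 g')
    (z b0 : Matrix (Fin n) (Fin n) E)
    (hz : InCenterLevi S0 z) (hb0 : IsBorel b0) (hrep : g' = z * g * b0)
    (u0 : Equiv.Perm (Fin n)) (hu0 : IsU0 S0 u0) (hu0W : WminRep S0 u0)
    (nu nu' : Matrix (Fin n) (Fin n) E)
    (hnu : IsUniUpper nu ∧ ∃ c, IsBorel c ∧ permMat E u0 * g = nu * w0Mat E n * c)
    (hnu' : IsUniUpper nu' ∧ ∃ c, IsBorel c ∧ permMat E u0 * g' = nu' * w0Mat E n * c) :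
    CrCosetEq (corner (n - S0.ncard) nu * w0Mat E (n - S0.ncard))
        (corner (n - S0.ncard) nu' * w0Mat E (n - S0.ncard)) ∧
    ∀ v : Equiv.Perm (Fin (n - S0.ncard)),
      InBigCell (permMat E v * (corner (n - S0.ncard) nu * w0Mat E (n - S0.ncard))) := by
  classical
  obtain ⟨hnuU, c, hc, hgc⟩ := hnu
  obtain ⟨hnuU', c', hc', hgc'⟩ := hnu'
  have hcard : S0.ncard ≤ n := ncard_le S0 hS0
  set s : ℕ := n - S0.ncard with hsdef
  have hs : s ≤ n := Nat.sub_le _ _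
  have hns : n - s = S0.ncard := by omega
  set emb : Fin s → Fin n := fun k => ⟨n - s + (k : ℕ), by have := k.isLt; omega⟩ with hemb
  have hzdiag : ∀ i : Fin n, z i i ≠ 0 :=
    diag_ne_zero_of_upper (fun i j hij => hz.2.1 i j hij.ne') hz.1
  -- the diagonal matrix `d = [u₀] z [u₀]⁻¹`
  set d : Matrix (Fin n) (Fin n) E :=
    Matrix.diagonal (fun i => z (u0⁻¹ i) (u0⁻¹ i)) with hd
  set dinv : Matrix (Fin n) (Fin n) E :=
    Matrix.diagonal (fun i => (z (u0⁻¹ i) (u0⁻¹ i))⁻¹) with hdinv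
  have hdinvd : dinv * d = 1 := by
    have hfun : (fun i => (z (u0⁻¹ i) (u0⁻¹ i))⁻¹ * z (u0⁻¹ i) (u0⁻¹ i)) = fun _ : Fin n => (1 : E) :=
      funext fun i => inv_mul_cancel₀ (hzdiag _)
    rw [hd, hdinv, Matrix.diagonal_mul_diagonal, hfun, Matrix.diagonal_one]
  have hperm0 : permMat E u0 * z = d * permMat E u0 := by
    ext i j
    rw [permMat_mul_apply, hd, Matrix.diagonal_mul]
    simp only [permMat, Matrix.of_apply]
    by_cases h : i = u0 j
    · rw [if_pos h, mul_one]
      have hj : u0⁻¹ i = j := by rw [h]; simp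
      rw [hj]
    · rw [if_neg h, mul_zero]
      refine hz.2.1 _ _ (fun hcon => h ?_)
      rw [← hcon]
      simp
  have e1 : permMat E u0 * g' = d * (nu * w0Mat E n * c) * b0 := by
    rw [hrep]
    calc permMat E u0 * (z * g * b0) = permMat E u0 * z * g * b0 := by simp only [mul_assoc]
      _ = d * permMat E u0 * g * b0 := by rw [hperm0]
      _ = d * (permMat E u0 * g) * b0 := by simp only [mul_assoc]
      _ = d * (nu * w0Mat E n * c) * b0 := by rw [hgc]
  have e2 : d * (nu * w0Mat E n * c) * b0
      = (d * nu * dinv) * w0Mat E n * ((w0Mat E n * d * w0Mat E n) * c * b0) := by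
    simp only [mul_assoc]
    rw [mul_mul_cancel (w0_mul_w0 (E := E) (n := n)), mul_mul_cancel hdinvd]
  have hborelW : IsBorel ((w0Mat E n * d * w0Mat E n) * c * b0) := by
    refine ((borel_of_diag ?_ ?_).mul hc).mul hb0
    · intro i j hij
      rw [w0_conj_apply, hd, Matrix.diagonal_apply_ne _ (fun hcon => hij (Fin.rev_injective hcon))]
    · intro i
      rw [w0_conj_apply, hd, Matrix.diagonal_apply_eq]
      exact hzdiag _
  have hdnud : IsUniUpper (d * nu * dinv) := by
    have happly : ∀ i j : Fin n, (d * nu * dinv) i j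
        = z (u0⁻¹ i) (u0⁻¹ i) * nu i j * (z (u0⁻¹ j) (u0⁻¹ j))⁻¹ := by
      intro i j
      rw [hdinv, Matrix.mul_diagonal, hd, Matrix.diagonal_mul]
    constructor
    · intro i j hij
      rw [happly, hnuU.1 i j hij, mul_zero, zero_mul]
    · intro i
      rw [happly, hnuU.2 i, mul_one, mul_inv_cancel₀ (hzdiag _)]
  have hnu'eq : nu' = d * nu * dinv :=
    unip_unique hnuU' hdnud hc' hborelW (hgc'.symm.trans (e1.trans e2))
  constructor
  · -- well-definedness on the double coset
    set Ds : Matrix (Fin s) (Fin s) E :=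
      Matrix.diagonal (fun k : Fin s => z (u0⁻¹ (emb k)) (u0⁻¹ (emb k))) with hDs
    set Dsi : Matrix (Fin s) (Fin s) E :=
      Matrix.diagonal (fun k : Fin s => (z (u0⁻¹ (emb k)) (u0⁻¹ (emb k)))⁻¹) with hDsi
    have hcorner' : corner s nu' = Ds * corner s nu * Dsi := by
      ext i j
      rw [corner_apply hs, hnu'eq, hdinv, Matrix.mul_diagonal, hd, Matrix.diagonal_mul,
        hDsi, Matrix.mul_diagonal, hDs, Matrix.diagonal_mul, corner_apply hs]
    refine ⟨Ds, w0Mat E s * Dsi * w0Mat E s,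
      ⟨?_, fun i j hij => by rw [hDs, Matrix.diagonal_apply_ne _ hij]⟩, ?_, ?_⟩
    · refine isUnit_of_upper (fun i j hij => by rw [hDs, Matrix.diagonal_apply_ne _ hij.ne'])
        (fun i => by rw [hDs, Matrix.diagonal_apply_eq]; exact hzdiag _)
    · refine borel_of_diag ?_ ?_
      · intro i j hij
        rw [w0_conj_apply, hDsi,
          Matrix.diagonal_apply_ne _ (fun hcon => hij (Fin.rev_injective hcon))]
      · intro i
        rw [w0_conj_apply, hDsi, Matrix.diagonal_apply_eq]
        exact inv_ne_zero (hzdiag _)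
    · rw [hcorner']
      simp only [mul_assoc]
      rw [mul_mul_cancel (w0_mul_w0 (E := E) (n := s))]
  · -- non-criticality of the crystalline parameter
    intro v
    set w : Equiv.Perm (Fin n) := liftPerm hs v with hw
    have hwmin : WminRep S0 (w * u0) := by
      intro i j hj hiS0
      have hui : (u0 i : ℕ) < n - s := by
        have := u0_lt S0 hS0 u0 hu0 i hiS0; omega
      have hfix : w (u0 i) = u0 i := liftPerm_lt hs v _ hui
      simp only [Equiv.Perm.mul_apply]
      by_cases hjS : (j : ℕ) ∈ S0
      · have hij : i < j := by rw [Fin.lt_def]; omega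
        have h2 : u0 i < u0 j := hu0.2.1 i j hij hiS0 hjS
        have huj : (u0 j : ℕ) < n - s := by
          have := u0_lt S0 hS0 u0 hu0 j hjS; omega
        rw [hfix, liftPerm_lt hs v _ huj]
        exact h2
      · have h2 := u0_ge S0 hS0 u0 hu0 j hjS
        have h3 : n - s ≤ (w (u0 j) : ℕ) := liftPerm_ge hs v _ (by omega)
        rw [hfix, Fin.lt_def]
        omega
    obtain ⟨b, b', hb, hb', hbig⟩ := hg.2 (w * u0) hwmin
    have h1 : permMat E w * nu * w0Mat E n * c = b * w0Mat E n * b' := by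
      calc permMat E w * nu * w0Mat E n * c
          = permMat E w * (nu * w0Mat E n * c) := by simp only [mul_assoc]
        _ = permMat E w * (permMat E u0 * g) := by rw [hgc]
        _ = permMat E (w * u0) * g := by rw [permMat_mul, mul_assoc]
        _ = b * w0Mat E n * b' := hbig
    have h2 : permMat E w * nu = b * (w0Mat E n * (b' * c⁻¹) * w0Mat E n) := by
      have h2' := congrArg (fun M => M * c⁻¹ * w0Mat E n) h1
      rw [mul_assoc (permMat E w * nu * w0Mat E n) c c⁻¹, hc.mul_inv_cancel, mul_one,
        mul_assoc (permMat E w * nu) (w0Mat E n) (w0Mat E n), w0_mul_w0, mul_one] at h2'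
      rw [h2']
      simp only [mul_assoc]
    set Lm : Matrix (Fin n) (Fin n) E := w0Mat E n * (b' * c⁻¹) * w0Mat E n with hLmdef
    have hLmlow : ∀ i j : Fin n, i < j → Lm i j = 0 := by
      intro i j hij
      rw [hLmdef, w0_conj_apply]
      exact (hb'.mul hc.inv).2 _ _ (by rwa [Fin.rev_lt_rev])
    have hLmunit : IsUnit Lm := (isUnit_w0.mul (hb'.mul hc.inv).1).mul isUnit_w0
    obtain ⟨hclow, hcunit⟩ := corner_lower hs hLmlow hLmunit
    have hc1 : corner s (permMat E w * nu) = corner s b * corner s Lm := by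
      rw [h2]
      exact corner_mul_upper hs b Lm hb.2
    have hc2 : corner s (permMat E w * nu) = permMat E v * corner s nu := by
      ext i j
      rw [corner_apply hs, permMat_mul_apply, permMat_mul_apply, corner_apply hs, hw,
        liftPerm_inv_add hs v i]
    refine ⟨corner s b, w0Mat E s * corner s Lm * w0Mat E s, corner_borel hs hb, ⟨?_, ?_⟩, ?_⟩
    · exact (isUnit_w0.mul hcunit).mul isUnit_w0
    · intro i j hij
      rw [w0_conj_apply]
      exact hclow _ _ (by rwa [Fin.rev_lt_rev])
    · calc permMat E v * (corner s nu * w0Mat E s)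
          = (permMat E v * corner s nu) * w0Mat E s := by rw [mul_assoc]
        _ = (corner s b * corner s Lm) * w0Mat E s := by rw [← hc2, hc1]
        _ = corner s b * w0Mat E s * (w0Mat E s * corner s Lm * w0Mat E s) := by
            simp only [mul_assoc]
            rw [mul_mul_cancel (w0_mul_w0 (E := E) (n := s))]


end Stmt8
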